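/- Let 0 < s < s₀, α > 0, C_ω ≥ 0, and suppose a sequence of correlation quantities ρ_n(φ,ψ) (bilinear in φ, ψ) satisfies: |ρ_n(φ,ψ)| ≤ ‖φ‖_{L²}‖ψ‖_{L²} for all φ,ψ, and |ρ_n(φ,ψ)| ≤ C_ω e^{−αn} ‖φ‖_{H^{s₀}}‖ψ‖_{H^{s₀}} for all φ,ψ in H^{s₀}. Then with β = α/(2(s₀/s) − 1), for all φ,ψ ∈ H^s: |ρ_n(φ,ψ)| ≤ (C_ω + 3) e^{−βn} ‖φ‖_{H^s}‖ψ‖_{H^s}. -/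

import Mathlib

set_option maxHeartbeats 1000000


/-- Interpolation of quenched exponential mixing: if the bilinear correlations `ρ n`
are bounded by the `L²` norms and decay exponentially with rate `α` against `H^{s₀}`
norms with prefactor `C_ω`, then they decay with rate `β = α/(2(s₀/s) - 1)` against
`H^s` norms with prefactor `C_ω + 3`, for any `0 < s < s₀`.
Sobolev norms are defined spectrally from eigenvalues `l i ≥ 1`. -/
theorem stmt2 (l : ℕ → ℝ) (hl : ∀ i, 1 ≤ l i)
    (ρ : ℕ → (ℕ → ℝ) → (ℕ → ℝ) → ℝ)
    (hadd1 : ∀ n φ₁ φ₂ ψ, ρ n (φ₁ + φ₂) ψ = ρ n φ₁ ψ + ρ n φ₂ ψ)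
    (hadd2 : ∀ n φ ψ₁ ψ₂, ρ n φ (ψ₁ + ψ₂) = ρ n φ ψ₁ + ρ n φ ψ₂)
    (s s₀ α Cω : ℝ) (hs : 0 < s) (hss0 : s < s₀) (hα : 0 < α) (hCω : 0 ≤ Cω)
    (hL2 : ∀ (n : ℕ) (φ ψ : ℕ → ℝ), Summable (fun i => (φ i) ^ 2) →
      Summable (fun i => (ψ i) ^ 2) →
      |ρ n φ ψ| ≤ Real.sqrt (∑' i, (φ i) ^ 2) * Real.sqrt (∑' i, (ψ i) ^ 2))
    (hmix : ∀ (n : ℕ) (φ ψ : ℕ → ℝ), Summable (fun i => (φ i) ^ 2 * l i ^ (2 * s₀)) →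
      Summable (fun i => (ψ i) ^ 2 * l i ^ (2 * s₀)) →
      |ρ n φ ψ| ≤ Cω * Real.exp (-α * n) *
        Real.sqrt (∑' i, (φ i) ^ 2 * l i ^ (2 * s₀)) *
        Real.sqrt (∑' i, (ψ i) ^ 2 * l i ^ (2 * s₀))) :
    ∀ (n : ℕ) (φ ψ : ℕ → ℝ), Summable (fun i => (φ i) ^ 2 * l i ^ (2 * s)) →
      Summable (fun i => (ψ i) ^ 2 * l i ^ (2 * s)) →
      |ρ n φ ψ| ≤ (Cω + 3) * Real.exp (-(α / (2 * (s₀ / s) - 1)) * n) *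
        Real.sqrt (∑' i, (φ i) ^ 2 * l i ^ (2 * s)) *
        Real.sqrt (∑' i, (ψ i) ^ 2 * l i ^ (2 * s)) := by
  intro n φ ψ hφ hψ
  have hs0 : (0:ℝ) < s₀ := hs.trans hss0
  have hd : (1:ℝ) < 2 * (s₀ / s) - 1 := by
    have h1 : 1 < s₀ / s := (one_lt_div hs).mpr hss0
    linarith
  set β := α / (2 * (s₀ / s) - 1) with hβdef
  have hβpos : 0 < β := div_pos hα (by linarith)
  have hβα : β * (2 * (s₀ / s) - 1) = α := div_mul_cancel₀ α (by linarith)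
  have hds : (2 * (s₀ / s) - 1) * s = 2 * s₀ - s := by field_simp
  have hβα' : β * (2 * s₀ - s) = α * s := by rw [← hds, ← mul_assoc, hβα]
  set lam := Real.exp (β * n / s) with hlamdef
  have hlam1 : 1 ≤ lam := Real.one_le_exp (by positivity)
  have hlampos : (0:ℝ) < lam := one_pos.trans_le hlam1
  have hlpos : ∀ i, (0:ℝ) < l i := fun i => one_pos.trans_le (hl i)
  set T : (ℕ → ℝ) → ℕ → ℝ := fun f i => if l i ≤ lam then f i else 0 with hTdef
  set R : (ℕ → ℝ) → ℕ → ℝ := fun f i => if l i ≤ lam then 0 else f i with hRdef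
  have hTR : ∀ f : ℕ → ℝ, T f + R f = f := by
    intro f; funext i
    by_cases h : l i ≤ lam <;> simp [hTdef, hRdef, h]
  have sqrt_fact : ∀ (c X : ℝ), 0 ≤ X →
      Real.sqrt (lam ^ (2 * c) * X) = lam ^ c * Real.sqrt X := by
    intro c X hX
    have h2 : lam ^ (2 * c) = lam ^ c * lam ^ c := by
      rw [two_mul, Real.rpow_add hlampos]
    have h3 : (0:ℝ) ≤ lam ^ c := (Real.rpow_pos_of_pos hlampos c).le
    rw [h2, mul_assoc, Real.sqrt_mul h3, Real.sqrt_mul h3, ← mul_assoc,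
      Real.mul_self_sqrt h3]
  have key : ∀ f : ℕ → ℝ, Summable (fun i => f i ^ 2 * l i ^ (2 * s)) →
      (Summable (fun i => (T f i) ^ 2 * l i ^ (2 * s₀)) ∧
       Summable (fun i => (T f i) ^ 2) ∧
       Summable (fun i => (R f i) ^ 2) ∧
       Real.sqrt (∑' i, (T f i) ^ 2 * l i ^ (2 * s₀)) ≤
         lam ^ (s₀ - s) * Real.sqrt (∑' i, f i ^ 2 * l i ^ (2 * s)) ∧
       Real.sqrt (∑' i, (T f i) ^ 2) ≤ Real.sqrt (∑' i, f i ^ 2 * l i ^ (2 * s)) ∧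
       Real.sqrt (∑' i, (R f i) ^ 2) ≤
         lam ^ (-s) * Real.sqrt (∑' i, f i ^ 2 * l i ^ (2 * s))) := by
    intro f hf
    have hbT : ∀ i, (T f i) ^ 2 * l i ^ (2 * s₀) ≤
        lam ^ (2 * (s₀ - s)) * (f i ^ 2 * l i ^ (2 * s)) := by
      intro i
      by_cases h : l i ≤ lam
      · simp only [hTdef, if_pos h]
        have hsplit : l i ^ (2 * s₀) = l i ^ (2 * (s₀ - s)) * l i ^ (2 * s) := by
          rw [← Real.rpow_add (hlpos i)]; ring_nf
        rw [hsplit]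
        have hle : l i ^ (2 * (s₀ - s)) ≤ lam ^ (2 * (s₀ - s)) :=
          Real.rpow_le_rpow (hlpos i).le h (by nlinarith)
        have hnn : (0:ℝ) ≤ f i ^ 2 * l i ^ (2 * s) :=
          mul_nonneg (sq_nonneg _) (Real.rpow_nonneg (hlpos i).le _)
        calc f i ^ 2 * (l i ^ (2 * (s₀ - s)) * l i ^ (2 * s))
            = l i ^ (2 * (s₀ - s)) * (f i ^ 2 * l i ^ (2 * s)) := by ring
          _ ≤ lam ^ (2 * (s₀ - s)) * (f i ^ 2 * l i ^ (2 * s)) :=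
              mul_le_mul_of_nonneg_right hle hnn
      · simp only [hTdef, if_neg h]
        have : (0:ℝ) ≤ lam ^ (2 * (s₀ - s)) * (f i ^ 2 * l i ^ (2 * s)) :=
          mul_nonneg (Real.rpow_nonneg hlampos.le _)
            (mul_nonneg (sq_nonneg _) (Real.rpow_nonneg (hlpos i).le _))
        simpa using this
    have hbT2 : ∀ i, (T f i) ^ 2 ≤ f i ^ 2 * l i ^ (2 * s) := by
      intro i
      by_cases h : l i ≤ lam
      · simp only [hTdef, if_pos h]
        have h1 : (1:ℝ) ≤ l i ^ (2 * s) := Real.one_le_rpow (hl i) (by linarith)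
        nlinarith [sq_nonneg (f i)]
      · simp only [hTdef, if_neg h]
        have : (0:ℝ) ≤ f i ^ 2 * l i ^ (2 * s) :=
          mul_nonneg (sq_nonneg _) (Real.rpow_nonneg (hlpos i).le _)
        simpa using this
    have hbR : ∀ i, (R f i) ^ 2 ≤ lam ^ (2 * (-s)) * (f i ^ 2 * l i ^ (2 * s)) := by
      intro i
      by_cases h : l i ≤ lam
      · simp only [hRdef, if_pos h]
        have : (0:ℝ) ≤ lam ^ (2 * (-s)) * (f i ^ 2 * l i ^ (2 * s)) :=
          mul_nonneg (Real.rpow_nonneg hlampos.le _)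
            (mul_nonneg (sq_nonneg _) (Real.rpow_nonneg (hlpos i).le _))
        simpa using this
      · simp only [hRdef, if_neg h]
        have hgl : lam ≤ l i := (not_le.mp h).le
        have hpow : lam ^ (2 * s) ≤ l i ^ (2 * s) :=
          Real.rpow_le_rpow hlampos.le hgl (by linarith)
        have h0 : (0:ℝ) < lam ^ (2 * s) := Real.rpow_pos_of_pos hlampos _
        have hinv : lam ^ (2 * (-s)) = (lam ^ (2 * s))⁻¹ := by
          rw [show 2 * (-s) = -(2 * s) by ring, Real.rpow_neg hlampos.le]
        rw [hinv, ← div_eq_inv_mul, le_div_iff₀ h0]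
        have : f i ^ 2 * lam ^ (2 * s) ≤ f i ^ 2 * l i ^ (2 * s) :=
          mul_le_mul_of_nonneg_left hpow (sq_nonneg _)
        linarith
    have sT : Summable (fun i => (T f i) ^ 2 * l i ^ (2 * s₀)) :=
      Summable.of_nonneg_of_le
        (fun i => mul_nonneg (sq_nonneg _) (Real.rpow_nonneg (hlpos i).le _))
        hbT (hf.mul_left _)
    have sT2 : Summable (fun i => (T f i) ^ 2) :=
      Summable.of_nonneg_of_le (fun i => sq_nonneg _) hbT2 hf
    have sR : Summable (fun i => (R f i) ^ 2) :=
      Summable.of_nonneg_of_le (fun i => sq_nonneg _) hbR (hf.mul_left _)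
    have hA : (0:ℝ) ≤ ∑' i, f i ^ 2 * l i ^ (2 * s) :=
      tsum_nonneg fun i => mul_nonneg (sq_nonneg _) (Real.rpow_nonneg (hlpos i).le _)
    refine ⟨sT, sT2, sR, ?_, ?_, ?_⟩
    · rw [← sqrt_fact (s₀ - s) _ hA]
      apply Real.sqrt_le_sqrt
      rw [← tsum_mul_left]
      exact Summable.tsum_le_tsum hbT sT (hf.mul_left _)
    · exact Real.sqrt_le_sqrt (Summable.tsum_le_tsum hbT2 sT2 hf)
    · rw [← sqrt_fact (-s) _ hA]
      apply Real.sqrt_le_sqrt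
      rw [← tsum_mul_left]
      exact Summable.tsum_le_tsum hbR sR (hf.mul_left _)
  obtain ⟨sTφ, sTφ2, sRφ, bTφ, bTφ2, bRφ⟩ := key φ hφ
  obtain ⟨sTψ, sTψ2, sRψ, bTψ, bTψ2, bRψ⟩ := key ψ hψ
  set A := ∑' i, φ i ^ 2 * l i ^ (2 * s) with hA
  set B := ∑' i, ψ i ^ 2 * l i ^ (2 * s) with hB
  have hsA : (0:ℝ) ≤ Real.sqrt A := Real.sqrt_nonneg _
  have hsB : (0:ℝ) ≤ Real.sqrt B := Real.sqrt_nonneg _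
  set E := Real.exp (-β * n) with hE
  have hEpos : 0 < E := Real.exp_pos _
  have hE1 : E ≤ 1 := by
    rw [hE, Real.exp_le_one_iff]
    have : (0:ℝ) ≤ β * n := by positivity
    linarith
  have hlamE : lam ^ (-s) = E := by
    rw [hlamdef, ← Real.exp_mul, hE]
    congr 1
    rw [mul_neg, div_mul_cancel₀ _ hs.ne', neg_mul]
  have hmixE : Real.exp (-α * n) * lam ^ (2 * (s₀ - s)) = E := by
    rw [hlamdef, ← Real.exp_mul, ← Real.exp_add, hE]
    congr 1
    field_simp
    linear_combination (n : ℝ) * hβα'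
  have hll : lam ^ (s₀ - s) * lam ^ (s₀ - s) = lam ^ (2 * (s₀ - s)) := by
    rw [← Real.rpow_add hlampos]; ring_nf
  have hsplit : ρ n φ ψ = ρ n (T φ) (T ψ) + ρ n (T φ) (R ψ) +
      ρ n (R φ) (T ψ) + ρ n (R φ) (R ψ) := by
    conv_lhs => rw [← hTR φ, ← hTR ψ]
    rw [hadd1, hadd2, hadd2]
    ring
  have t1 : |ρ n (T φ) (T ψ)| ≤ Cω * E * (Real.sqrt A * Real.sqrt B) := by
    calc |ρ n (T φ) (T ψ)|
        ≤ Cω * Real.exp (-α * n) * Real.sqrt (∑' i, (T φ i) ^ 2 * l i ^ (2 * s₀)) *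
          Real.sqrt (∑' i, (T ψ i) ^ 2 * l i ^ (2 * s₀)) := hmix n (T φ) (T ψ) sTφ sTψ
      _ ≤ Cω * Real.exp (-α * n) * (lam ^ (s₀ - s) * Real.sqrt A) *
          (lam ^ (s₀ - s) * Real.sqrt B) := by
          have hc : (0:ℝ) ≤ Cω * Real.exp (-α * n) := by positivity
          have h1 := mul_le_mul_of_nonneg_left bTφ hc
          have h2 := mul_le_mul h1 bTψ (Real.sqrt_nonneg _)
            (mul_nonneg hc (mul_nonneg (Real.rpow_nonneg hlampos.le _) hsA))
          exact h2
      _ = Cω * E * (Real.sqrt A * Real.sqrt B) := by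
          rw [← hmixE, ← hll]; ring
  have t2 : |ρ n (T φ) (R ψ)| ≤ E * (Real.sqrt A * Real.sqrt B) := by
    calc |ρ n (T φ) (R ψ)|
        ≤ Real.sqrt (∑' i, (T φ i) ^ 2) * Real.sqrt (∑' i, (R ψ i) ^ 2) :=
          hL2 n _ _ sTφ2 sRψ
      _ ≤ Real.sqrt A * (lam ^ (-s) * Real.sqrt B) :=
          mul_le_mul bTφ2 bRψ (Real.sqrt_nonneg _) hsA
      _ = E * (Real.sqrt A * Real.sqrt B) := by rw [hlamE]; ring
  have t3 : |ρ n (R φ) (T ψ)| ≤ E * (Real.sqrt A * Real.sqrt B) := by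
    calc |ρ n (R φ) (T ψ)|
        ≤ Real.sqrt (∑' i, (R φ i) ^ 2) * Real.sqrt (∑' i, (T ψ i) ^ 2) :=
          hL2 n _ _ sRφ sTψ2
      _ ≤ (lam ^ (-s) * Real.sqrt A) * Real.sqrt B :=
          mul_le_mul bRφ bTψ2 (Real.sqrt_nonneg _)
            (mul_nonneg (Real.rpow_nonneg hlampos.le _) hsA)
      _ = E * (Real.sqrt A * Real.sqrt B) := by rw [hlamE]; ring
  have t4 : |ρ n (R φ) (R ψ)| ≤ E * (Real.sqrt A * Real.sqrt B) := by
    calc |ρ n (R φ) (R ψ)|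
        ≤ Real.sqrt (∑' i, (R φ i) ^ 2) * Real.sqrt (∑' i, (R ψ i) ^ 2) :=
          hL2 n _ _ sRφ sRψ
      _ ≤ (lam ^ (-s) * Real.sqrt A) * (lam ^ (-s) * Real.sqrt B) :=
          mul_le_mul bRφ bRψ (Real.sqrt_nonneg _)
            (mul_nonneg (Real.rpow_nonneg hlampos.le _) hsA)
      _ = E * E * (Real.sqrt A * Real.sqrt B) := by rw [hlamE]; ring
      _ ≤ E * (Real.sqrt A * Real.sqrt B) :=
          mul_le_mul_of_nonneg_right (mul_le_of_le_one_right hEpos.le hE1)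
            (mul_nonneg hsA hsB)
  calc |ρ n φ ψ| = |ρ n (T φ) (T ψ) + ρ n (T φ) (R ψ) +
        ρ n (R φ) (T ψ) + ρ n (R φ) (R ψ)| := by rw [hsplit]
    _ ≤ |ρ n (T φ) (T ψ) + ρ n (T φ) (R ψ) + ρ n (R φ) (T ψ)| + |ρ n (R φ) (R ψ)| :=
        abs_add_le _ _
    _ ≤ |ρ n (T φ) (T ψ) + ρ n (T φ) (R ψ)| + |ρ n (R φ) (T ψ)| + |ρ n (R φ) (R ψ)| :=
        add_le_add_left (abs_add_le _ _) _
    _ ≤ |ρ n (T φ) (T ψ)| + |ρ n (T φ) (R ψ)| + |ρ n (R φ) (T ψ)| + |ρ n (R φ) (R ψ)| := by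
        have := abs_add_le (ρ n (T φ) (T ψ)) (ρ n (T φ) (R ψ))
        linarith
    _ ≤ Cω * E * (Real.sqrt A * Real.sqrt B) + E * (Real.sqrt A * Real.sqrt B) +
        E * (Real.sqrt A * Real.sqrt B) + E * (Real.sqrt A * Real.sqrt B) :=
        add_le_add (add_le_add (add_le_add t1 t2) t3) t4
    _ = (Cω + 3) * E * Real.sqrt A * Real.sqrt B := by ring
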